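/- Quantitative continuity of the update at weakly regular profiles: let f be an (m,M)-weakly regular profile. Then there exists δ₀ with 0 < δ₀ ≤ 1/4 such that, for every δ ≤ δ₀ and every profile g with ‖f − g‖_∞ ≤ δ, one has ‖Uf − Ug‖_∞ ≤ 17·(M/m)·δ. -/

import Mathlib

open MeasureTheory Set

/-- The neighbourhood `N_α(f)` of an agent `α ∈ [0,1]`:
all agents `β ∈ [0,1]` whose opinion is within distance 1 of that of `α`. -/
def nbhdHK (f : ℝ → ℝ) (α : ℝ) : Set ℝ :=
  {β | β ∈ Icc (0:ℝ) 1 ∧ |f β - f α| ≤ 1}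

/-- The Hegselmann–Krause updating operator `U`:
`Uf(α)` is the average of `f` over `N_α(f)` if that set has positive Lebesgue
measure, and `f(α)` otherwise. -/
noncomputable def updateHK (f : ℝ → ℝ) (α : ℝ) : ℝ :=
  if 0 < (volume (nbhdHK f α)).toReal then
    (∫ β in nbhdHK f α, f β) / (volume (nbhdHK f α)).toReal
  else f α

/-- `f` is `(m,M)`-regular on `S`: `m·|α-β| ≤ |f(α)-f(β)| ≤ M·|α-β|` on `S`. -/
def RegularOnHK (m M : ℝ) (f : ℝ → ℝ) (S : Set ℝ) : Prop :=
  ∀ α ∈ S, ∀ β ∈ S, m * |α - β| ≤ |f α - f β| ∧ |f α - f β| ≤ M * |α - β|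

/-- `f` is `(m,M)`-weakly regular: there is a closed (possibly empty)
subinterval `S = [a,b]` of `N₀(f) ∩ N₁(f)` such that `f` is `(m,M)`-regular on
`[0,1] \ S`, `f` is constant on `S`, and, if `D(f) ≤ 2`, neither endpoint of the
interval `N₀(f) ∩ N₁(f)` is an endpoint of `S`. -/
def WeaklyRegularHK (m M : ℝ) (f : ℝ → ℝ) : Prop :=
  ∃ a b : ℝ, Icc a b ⊆ nbhdHK f 0 ∩ nbhdHK f 1 ∧
    RegularOnHK m M f (Icc (0:ℝ) 1 \ Icc a b) ∧
    (∀ x ∈ Icc a b, f x = f a) ∧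
    (f 1 - f 0 ≤ 2 → a ≤ b →
      a ≠ sInf (nbhdHK f 0 ∩ nbhdHK f 1) ∧ a ≠ sSup (nbhdHK f 0 ∩ nbhdHK f 1) ∧
      b ≠ sInf (nbhdHK f 0 ∩ nbhdHK f 1) ∧ b ≠ sSup (nbhdHK f 0 ∩ nbhdHK f 1))

set_option maxHeartbeats 1600000


/-- interval integral comparison from pointwise bound on the open interval -/
lemma myIntLe (h1 h2 : ℝ → ℝ) (a b : ℝ) (hab : a ≤ b)
    (i1 : IntegrableOn h1 (Ioc a b) volume) (i2 : IntegrableOn h2 (Ioc a b) volume)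
    (hle : ∀ x ∈ Ioo a b, h1 x ≤ h2 x) :
    (∫ x in a..b, h1 x) ≤ ∫ x in a..b, h2 x := by
  rw [intervalIntegral.integral_of_le hab, intervalIntegral.integral_of_le hab,
    integral_Ioc_eq_integral_Ioo, integral_Ioc_eq_integral_Ioo]
  exact setIntegral_mono_on (i1.mono_set Ioo_subset_Ioc_self)
    (i2.mono_set Ioo_subset_Ioc_self) measurableSet_Ioo hle

lemma diamLe {c d t : ℝ} (ht : 0 ≤ t)
    (h : ∀ x ∈ Ioo c d, ∀ y ∈ Ioo c d, |x - y| ≤ t) : d - c ≤ t := by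
  by_contra hc
  push_neg at hc
  have hdc : 0 < d - c := lt_of_le_of_lt ht hc
  set η := (d - c - t) / 3 with hη
  have hη0 : 0 < η := by rw [hη]; linarith
  have hx : c + η ∈ Ioo c d := by constructor <;> nlinarith
  have hy : d - η ∈ Ioo c d := by constructor <;> nlinarith
  have := h _ hx _ hy
  rw [abs_le] at this
  nlinarith [this.1, this.2]

lemma structLemma (h : ℝ → ℝ) (hmono : MonotoneOn h (Icc 0 1)) {α : ℝ} (hα : α ∈ Icc (0:ℝ) 1) :
    0 ≤ sInf (nbhdHK h α) ∧ sInf (nbhdHK h α) ≤ α ∧ α ≤ sSup (nbhdHK h α) ∧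
    sSup (nbhdHK h α) ≤ 1 ∧ Ioo (sInf (nbhdHK h α)) (sSup (nbhdHK h α)) ⊆ nbhdHK h α ∧
    nbhdHK h α ⊆ Icc (sInf (nbhdHK h α)) (sSup (nbhdHK h α)) ∧
    (sInf (nbhdHK h α) < sSup (nbhdHK h α) →
      updateHK h α = (∫ x in (sInf (nbhdHK h α))..(sSup (nbhdHK h α)), h x)
        / (sSup (nbhdHK h α) - sInf (nbhdHK h α))) := by
  set s := nbhdHK h α with hs
  have hsub : s ⊆ Icc 0 1 := fun x hx => hx.1
  have hself : α ∈ s := ⟨hα, by simp⟩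
  have hne : s.Nonempty := ⟨α, hself⟩
  have hbdd : BddBelow s := ⟨0, fun x hx => (hsub hx).1⟩
  have hbda : BddAbove s := ⟨1, fun x hx => (hsub hx).2⟩
  set p := sInf s with hp
  set q := sSup s with hq
  have h0p : 0 ≤ p := le_csInf hne fun x hx => (hsub hx).1
  have hpα : p ≤ α := csInf_le hbdd hself
  have hαq : α ≤ q := le_csSup hbda hself
  have hq1 : q ≤ 1 := csSup_le hne fun x hx => (hsub hx).2
  have hIoo : Ioo p q ⊆ s := by
    intro x hx
    obtain ⟨y, hy, hyx⟩ := exists_lt_of_csInf_lt hne hx.1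
    obtain ⟨z, hz, hxz⟩ := exists_lt_of_lt_csSup hne hx.2
    have hxI : x ∈ Icc (0:ℝ) 1 := ⟨le_trans (hsub hy).1 hyx.le, le_trans hxz.le (hsub hz).2⟩
    refine ⟨hxI, abs_le.2 ⟨?_, ?_⟩⟩
    · have := hmono (hsub hy) hxI hyx.le
      have h2 := (abs_le.1 hy.2).1
      linarith
    · have := hmono hxI (hsub hz) hxz.le
      have h2 := (abs_le.1 hz.2).2
      linarith
  have hIcc : s ⊆ Icc p q := fun x hx => ⟨csInf_le hbdd hx, le_csSup hbda hx⟩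
  refine ⟨h0p, hpα, hαq, hq1, hIoo, hIcc, fun hpq => ?_⟩
  have hvol : volume s = ENNReal.ofReal (q - p) := by
    apply le_antisymm
    · calc volume s ≤ volume (Icc p q) := measure_mono hIcc
        _ = ENNReal.ofReal (q - p) := Real.volume_Icc
    · calc ENNReal.ofReal (q - p) = volume (Ioo p q) := Real.volume_Ioo.symm
        _ ≤ volume s := measure_mono hIoo
  have hvt : (volume s).toReal = q - p := by
    rw [hvol, ENNReal.toReal_ofReal (by linarith)]
  have haeeq : s =ᵐ[volume] Ioo p q := by
    rw [MeasureTheory.ae_eq_set]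
    constructor
    · refine measure_mono_null ?_ (?_ : volume ({p, q} : Set ℝ) = 0)
      · intro x hx
        have := hIcc hx.1
        have h2 := hx.2
        rw [← Icc_diff_Ioo_same hpq.le]
        exact ⟨this, h2⟩
      · rw [show ({p, q} : Set ℝ) = {p} ∪ {q} by rfl]
        refine measure_union_null ?_ ?_ <;> simp
    · rw [diff_eq_empty.2 hIoo]
      simp
  have hint : (∫ x in s, h x) = ∫ x in p..q, h x := by
    rw [setIntegral_congr_set haeeq, intervalIntegral.integral_of_le hpq.le,
      integral_Ioc_eq_integral_Ioo]
  rw [updateHK, if_pos (by rw [hvt]; linarith), hvt, hint]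

lemma cruxLemma (h : ℝ → ℝ) (hmono : MonotoneOn h (Icc 0 1)) (c p u v q w l : ℝ)
    (h0p : 0 ≤ p) (hpu : p ≤ u) (huv : u < v) (hvq : v ≤ q) (hq1 : q ≤ 1)
    (hup : u - p ≤ w) (hqv : q - v ≤ w) (hl : l ≤ q - p) (hl0 : 0 < l)
    (hb : ∀ x ∈ Ioo p q, c - 1 ≤ h x ∧ h x ≤ c + 1) :
    |(∫ x in p..q, h x) / (q - p) - (∫ x in u..v, h x) / (v - u)| ≤ 2 * w / l := by
  have hI : IntegrableOn h (Icc (0:ℝ) 1) volume := hmono.integrableOn_isCompact isCompact_Icc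
  have hInt : ∀ a b : ℝ, 0 ≤ a → b ≤ 1 → IntegrableOn h (Ioc a b) volume := fun a b ha hb =>
    hI.mono_set (fun x hx => ⟨le_trans ha hx.1.le, le_trans hx.2 hb⟩)
  have hw0 : 0 ≤ w := le_trans (by linarith) hup
  have hu1 : u ≤ 1 := by linarith
  have h0u : 0 ≤ u := by linarith
  have h0v : 0 ≤ v := by linarith
  have hv1 : v ≤ 1 := by linarith
  have huvI : u ∈ Icc (0:ℝ) 1 := ⟨h0u, hu1⟩
  have hvI : v ∈ Icc (0:ℝ) 1 := ⟨h0v, hv1⟩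
  -- integrals
  set S1 := ∫ x in p..u, h x with hS1
  set S2 := ∫ x in u..v, h x with hS2
  set S3 := ∫ x in v..q, h x with hS3
  have hsplit : (∫ x in p..q, h x) = S1 + S2 + S3 := by
    rw [hS1, hS2, hS3,
      intervalIntegral.integral_add_adjacent_intervals
        ((intervalIntegrable_iff_integrableOn_Ioc_of_le hpu).2 (hInt p u h0p hu1))
        ((intervalIntegrable_iff_integrableOn_Ioc_of_le huv.le).2 (hInt u v h0u hv1)),
      intervalIntegral.integral_add_adjacent_intervals
        ((intervalIntegrable_iff_integrableOn_Ioc_of_le (by linarith)).2 (hInt p v h0p hv1))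
        ((intervalIntegrable_iff_integrableOn_Ioc_of_le hvq).2 (hInt v q h0v hq1))]
  set m2 := S2 / (v - u) with hm2
  have hvu : 0 < v - u := by linarith
  have hS2eq : S2 = (v - u) * m2 := by rw [hm2, mul_div_cancel₀ _ hvu.ne']
  -- constant integrals
  have hconst : ∀ (a b C : ℝ), (∫ _ in a..b, C) = (b - a) * C := by
    intro a b C; simp [mul_comm]
  -- bounds on S1
  have hS1le : S1 ≤ (u - p) * h u := by
    rw [show (u - p) * h u = ∫ _ in p..u, h u by rw [hconst]]
    exact myIntLe _ _ _ _ hpu (hInt p u h0p hu1) (by simp [integrableOn_const])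
      (fun x hx => hmono ⟨le_trans h0p hx.1.le, le_trans hx.2.le hu1⟩ huvI hx.2.le)
  have hS1ge : (u - p) * (c - 1) ≤ S1 := by
    rw [show (u - p) * (c - 1) = ∫ _ in p..u, (c-1) by rw [hconst]]
    exact myIntLe _ _ _ _ hpu (by simp [integrableOn_const]) (hInt p u h0p hu1)
      (fun x hx => (hb x ⟨hx.1, lt_of_lt_of_le hx.2 (by linarith)⟩).1)
  have hS2ge : (v - u) * h u ≤ S2 := by
    rw [show (v - u) * h u = ∫ _ in u..v, h u by rw [hconst]]
    exact myIntLe _ _ _ _ huv.le (by simp [integrableOn_const]) (hInt u v h0u hv1)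
      (fun x hx => hmono huvI ⟨le_trans h0u hx.1.le, le_trans hx.2.le hv1⟩ hx.1.le)
  have hS2le : S2 ≤ (v - u) * h v := by
    rw [show (v - u) * h v = ∫ _ in u..v, h v by rw [hconst]]
    exact myIntLe _ _ _ _ huv.le (hInt u v h0u hv1) (by simp [integrableOn_const])
      (fun x hx => hmono ⟨le_trans h0u hx.1.le, le_trans hx.2.le hv1⟩ hvI hx.2.le)
  have hS2ge' : (v - u) * (c - 1) ≤ S2 := by
    rw [show (v - u) * (c - 1) = ∫ _ in u..v, (c-1) by rw [hconst]]
    exact myIntLe _ _ _ _ huv.le (by simp [integrableOn_const]) (hInt u v h0u hv1)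
      (fun x hx => (hb x ⟨lt_of_le_of_lt hpu hx.1, lt_of_lt_of_le hx.2 hvq⟩).1)
  have hS2le' : S2 ≤ (v - u) * (c + 1) := by
    rw [show (v - u) * (c + 1) = ∫ _ in u..v, (c+1) by rw [hconst]]
    exact myIntLe _ _ _ _ huv.le (hInt u v h0u hv1) (by simp [integrableOn_const])
      (fun x hx => (hb x ⟨lt_of_le_of_lt hpu hx.1, lt_of_lt_of_le hx.2 hvq⟩).2)
  have hS3ge : (q - v) * h v ≤ S3 := by
    rw [show (q - v) * h v = ∫ _ in v..q, h v by rw [hconst]]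
    exact myIntLe _ _ _ _ hvq (by simp [integrableOn_const]) (hInt v q h0v hq1)
      (fun x hx => hmono hvI ⟨le_trans h0v hx.1.le, le_trans hx.2.le hq1⟩ hx.1.le)
  have hS3le : S3 ≤ (q - v) * (c + 1) := by
    rw [show (q - v) * (c + 1) = ∫ _ in v..q, (c+1) by rw [hconst]]
    exact myIntLe _ _ _ _ hvq (hInt v q h0v hq1) (by simp [integrableOn_const])
      (fun x hx => (hb x ⟨lt_of_le_of_lt (le_trans hpu huv.le) hx.1, hx.2⟩).2)
  -- m2 bounds
  have hm2u : h u ≤ m2 := by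
    rw [hm2, le_div_iff₀ hvu]; linarith
  have hm2v : m2 ≤ h v := by
    rw [hm2, div_le_iff₀ hvu]; linarith
  have hm2c1 : c - 1 ≤ m2 := by rw [hm2, le_div_iff₀ hvu]; linarith
  have hm2c2 : m2 ≤ c + 1 := by rw [hm2, div_le_iff₀ hvu]; linarith
  -- X and Y
  have hup0 : (0:ℝ) ≤ u - p := by linarith
  have hqv0 : (0:ℝ) ≤ q - v := by linarith
  have hX1 : S1 - (u - p) * m2 ≤ 0 := by
    have h1 := mul_le_mul_of_nonneg_left hm2u hup0
    linarith [hS1le, h1]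
  have hX2 : -(2 * (u - p)) ≤ S1 - (u - p) * m2 := by
    have h1 := mul_le_mul_of_nonneg_left hm2c2 hup0
    have h2 : (u - p) * (c - 1) = (u - p) * (c + 1) - 2 * (u - p) := by ring
    linarith [hS1ge]
  have hY1 : 0 ≤ S3 - (q - v) * m2 := by
    have h1 := mul_le_mul_of_nonneg_left hm2v hqv0
    linarith [hS3ge]
  have hY2 : S3 - (q - v) * m2 ≤ 2 * (q - v) := by
    have h1 := mul_le_mul_of_nonneg_left hm2c1 hqv0
    have h2 : (q - v) * (c + 1) = (q - v) * (c - 1) + 2 * (q - v) := by ring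
    linarith [hS3le]
  have hqp : 0 < q - p := lt_of_lt_of_le hl0 hl
  have hkey : (∫ x in p..q, h x) / (q - p) - m2
      = (S1 - (u - p) * m2 + (S3 - (q - v) * m2)) / (q - p) := by
    rw [hsplit]
    rw [div_sub' (ne_of_gt hqp)]
    congr 1
    rw [hS2eq]; ring
  rw [hkey]
  have habs : |S1 - (u - p) * m2 + (S3 - (q - v) * m2)| ≤ 2 * w := by
    rw [abs_le]; constructor <;> linarith
  rw [abs_div, abs_of_pos hqp]
  calc |S1 - (u - p) * m2 + (S3 - (q - v) * m2)| / (q - p)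
      ≤ (2 * w) / (q - p) := by
        exact div_le_div_of_nonneg_right habs hqp.le
    _ ≤ 2 * w / l := by
        apply div_le_div_of_nonneg_left (by linarith) hl0 hl

lemma windowDiam (m δ : ℝ) (hm : 0 < m) (hδ0 : 0 ≤ δ) (f : ℝ → ℝ) (P : Set ℝ)
    (hreg : ∀ x ∈ Icc (0:ℝ) 1 \ P, ∀ y ∈ Icc (0:ℝ) 1 \ P, m * |x - y| ≤ |f x - f y|)
    (c d L : ℝ)
    (hwin : ∀ z ∈ Ioo c d, (z ∈ Icc (0:ℝ) 1 \ P) ∧ L ≤ f z ∧ f z ≤ L + 2 * δ) :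
    d - c ≤ 2 * δ / m := by
  apply diamLe (by positivity)
  intro x hx y hy
  obtain ⟨hxP, hx1, hx2⟩ := hwin x hx
  obtain ⟨hyP, hy1, hy2⟩ := hwin y hy
  have h1 := hreg x hxP y hyP
  have h2 : |f x - f y| ≤ 2 * δ := abs_le.2 ⟨by linarith, by linarith⟩
  rw [le_div_iff₀ hm, mul_comm]
  linarith

lemma easyLemma (f g : ℝ → ℝ) (hf : MonotoneOn f (Icc 0 1)) (hg : MonotoneOn g (Icc 0 1))
    (δ : ℝ) (hδg : ∀ x ∈ Icc (0:ℝ) 1, |f x - g x| ≤ δ) (α : ℝ)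
    (hA : nbhdHK f α = Icc 0 1) (hB : nbhdHK g α = Icc 0 1) :
    |updateHK f α - updateHK g α| ≤ δ := by
  have hIf : IntegrableOn f (Icc (0:ℝ) 1) volume := hf.integrableOn_isCompact isCompact_Icc
  have hIg : IntegrableOn g (Icc (0:ℝ) 1) volume := hg.integrableOn_isCompact isCompact_Icc
  have hvol : (volume (Icc (0:ℝ) 1)).toReal = 1 := by
    rw [Real.volume_Icc]; norm_num
  rw [updateHK, updateHK, hA, hB, if_pos (by rw [hvol]; norm_num),
    if_pos (by rw [hvol]; norm_num), hvol, div_one, div_one,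
    ← integral_sub hIf hIg]
  calc |∫ x in Icc (0:ℝ) 1, (f x - g x)| ≤ δ * (volume (Icc (0:ℝ) 1)).toReal := by
        rw [← Real.norm_eq_abs]
        apply norm_setIntegral_le_of_norm_le_const
        · rw [Real.volume_Icc]; norm_num
        · intro x hx
          rw [Real.norm_eq_abs]
          exact hδg x hx
    _ = δ := by rw [hvol, mul_one]
  
lemma coreLemma (m M δ : ℝ) (hm : 0 < m) (hmM : m ≤ M)
    (f g : ℝ → ℝ) (hf : MonotoneOn f (Icc 0 1)) (hg : MonotoneOn g (Icc 0 1))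
    (P : Set ℝ)
    (hreg : ∀ x ∈ Icc (0:ℝ) 1 \ P, ∀ y ∈ Icc (0:ℝ) 1 \ P,
      m * |x - y| ≤ |f x - f y| ∧ |f x - f y| ≤ M * |x - y|)
    (hP : ∀ x ∈ P, ∀ γ ∈ Icc (0:ℝ) 1, |f x - f γ| ≤ 1 - 2 * δ)
    (h01 : f 1 - f 0 ≤ M)
    (hδ0 : 0 ≤ δ) (hδq : δ ≤ 1/4)
    (hδg : ∀ x ∈ Icc (0:ℝ) 1, |f x - g x| ≤ δ)
    (α : ℝ) (hα : α ∈ Icc (0:ℝ) 1) :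
    |updateHK f α - updateHK g α| ≤ 17 * (M / m) * δ := by
  have hM : 0 < M := lt_of_lt_of_le hm hmM
  have hMm1 : 1 ≤ M / m := (one_le_div hm).2 hmM
  have h17 : δ ≤ 17 * (M / m) * δ := by nlinarith
  have hI01 : (0:ℝ) ∈ Icc (0:ℝ) 1 := by norm_num
  have hI11 : (1:ℝ) ∈ Icc (0:ℝ) 1 := by norm_num
  -- trivial branch helper
  have easy : (∀ x ∈ Icc (0:ℝ) 1, |f x - f α| ≤ 1 - 2*δ) →
      |updateHK f α - updateHK g α| ≤ 17 * (M / m) * δ := by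
    intro hsmall
    have hA : nbhdHK f α = Icc 0 1 := by
      apply Subset.antisymm (fun x hx => hx.1)
      intro x hx
      exact ⟨hx, le_trans (hsmall x hx) (by linarith)⟩
    have hB : nbhdHK g α = Icc 0 1 := by
      apply Subset.antisymm (fun x hx => hx.1)
      intro x hx
      refine ⟨hx, ?_⟩
      have h1 := hδg x hx
      have h2 := hδg α hα
      have h3 := hsmall x hx
      have h4 : |g x - g α| ≤ |f x - f α| + 2 * δ := by
        have := abs_sub_abs_le_abs_sub (g x - g α) (f x - f α)
        have h5 : |g x - g α - (f x - f α)| ≤ 2 * δ := by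
          have : g x - g α - (f x - f α) = (f α - g α) - (f x - g x) := by ring
          rw [this]
          calc |f α - g α - (f x - g x)| ≤ |f α - g α| + |f x - g x| := abs_sub _ _
            _ ≤ 2 * δ := by linarith
        linarith
      linarith
    exact le_trans (easyLemma f g hf hg δ hδg α hA hB) h17
  by_cases hαP : α ∈ P
  · exact easy (fun x hx => by rw [abs_sub_comm]; exact hP α hαP x hx)
  by_cases hD : f 1 - f 0 ≤ 1 - 2*δ
  · apply easy
    intro x hx
    have h1 : f 0 ≤ f x := hf hI01 hx hx.1
    have h2 : f x ≤ f 1 := hf hx hI11 hx.2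
    have h3 : f 0 ≤ f α := hf hI01 hα hα.1
    have h4 : f α ≤ f 1 := hf hα hI11 hα.2
    rw [abs_le]; constructor <;> linarith
  push_neg at hD
  -- main branch
  set r := (1 - 2*δ)/M with hrdef
  have hr0 : 0 < r := by apply div_pos; linarith; exact hM
  have hr1 : r ≤ 1 := by rw [div_le_one hM]; linarith
  have hMr : M * r = 1 - 2*δ := by rw [hrdef, mul_div_cancel₀ _ hM.ne']
  -- J properties
  set J1 := max (α - r) 0 with hJ1def
  set J2 := min (α + r) 1 with hJ2def
  have hJ : ∀ x ∈ Icc J1 J2, x ∈ Icc (0:ℝ) 1 ∧ |f x - f α| ≤ 1 - 2*δ := by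
    intro x hx
    have hxI : x ∈ Icc (0:ℝ) 1 :=
      ⟨le_trans (le_max_right _ _) hx.1, le_trans hx.2 (min_le_right _ _)⟩
    refine ⟨hxI, ?_⟩
    by_cases hxP : x ∈ P
    · exact hP x hxP α hα
    · have h1 := (hreg x ⟨hxI, hxP⟩ α ⟨hα, hαP⟩).2
      have h2 : |x - α| ≤ r := by
        rw [abs_le]
        constructor
        · have := le_trans (le_max_left _ _) hx.1; linarith
        · have := le_trans hx.2 (min_le_left _ _); linarith
      calc |f x - f α| ≤ M * |x - α| := h1
        _ ≤ M * r := by apply mul_le_mul_of_nonneg_left h2 hM.le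
        _ = 1 - 2*δ := hMr
  have hJA : ∀ x ∈ Icc J1 J2, x ∈ nbhdHK f α := by
    intro x hx
    obtain ⟨h1, h2⟩ := hJ x hx
    exact ⟨h1, by linarith⟩
  have hJB : ∀ x ∈ Icc J1 J2, x ∈ nbhdHK g α := by
    intro x hx
    obtain ⟨h1, h2⟩ := hJ x hx
    refine ⟨h1, ?_⟩
    have ha1 := hδg x h1
    have ha2 := hδg α hα
    have : |g x - g α| ≤ |f x - f α| + (|f x - g x| + |f α - g α|) := by
      have h5 : g x - g α = (f x - f α) - ((f x - g x) - (f α - g α)) := by ring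
      rw [h5]
      calc |f x - f α - (f x - g x - (f α - g α))| ≤ |f x - f α| + |f x - g x - (f α - g α)| :=
            abs_sub _ _
        _ ≤ |f x - f α| + (|f x - g x| + |f α - g α|) := by
            have := abs_sub (f x - g x) (f α - g α)
            linarith
    linarith
  have hJ1J2 : J1 ≤ J2 := by
    apply le_trans (max_le (by linarith [hα.2]) hα.1)
    exact le_min (by linarith [hα.1]) hα.2
  have hJ1mem : J1 ∈ Icc J1 J2 := ⟨le_rfl, hJ1J2⟩
  have hJ2mem : J2 ∈ Icc J1 J2 := ⟨hJ1J2, le_rfl⟩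
  -- structure of neighbourhoods
  have hbddA : BddBelow (nbhdHK f α) := ⟨0, fun x hx => hx.1.1⟩
  have hbdaA : BddAbove (nbhdHK f α) := ⟨1, fun x hx => hx.1.2⟩
  have hbddB : BddBelow (nbhdHK g α) := ⟨0, fun x hx => hx.1.1⟩
  have hbdaB : BddAbove (nbhdHK g α) := ⟨1, fun x hx => hx.1.2⟩
  obtain ⟨h0p, hpα, hαq, hq1, hIooA, hAIcc, hupf⟩ := structLemma f hf hα
  obtain ⟨h0p', hp'α, hαq', hq'1, hIooB, hBIcc, hupg⟩ := structLemma g hg hα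
  set p := sInf (nbhdHK f α) with hpdef
  set q := sSup (nbhdHK f α) with hqdef
  set p' := sInf (nbhdHK g α) with hp'def
  set q' := sSup (nbhdHK g α) with hq'def
  set u := max p p' with hudef
  set v := min q q' with hvdef
  have hpu : p ≤ u := le_max_left _ _
  have hp'u : p' ≤ u := le_max_right _ _
  have hvq : v ≤ q := min_le_left _ _
  have hvq' : v ≤ q' := min_le_right _ _
  have huJ1 : u ≤ J1 := max_le (csInf_le hbddA (hJA J1 hJ1mem)) (csInf_le hbddB (hJB J1 hJ1mem))
  have hJ2v : J2 ≤ v := le_min (le_csSup hbdaA (hJA J2 hJ2mem)) (le_csSup hbdaB (hJB J2 hJ2mem))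
  have hrJ : r ≤ J2 - J1 := by
    rcases max_cases (α - r) 0 with ⟨he, hc⟩ | ⟨he, hc⟩ <;>
      rcases min_cases (α + r) 1 with ⟨he2, hc2⟩ | ⟨he2, hc2⟩ <;>
      rw [hJ1def, hJ2def, he, he2] <;> linarith [hα.1, hα.2]
  have hruv : r ≤ v - u := by linarith
  have huv : u < v := by linarith
  -- window facts: z in A iff in Icc and |f z - f α| ≤ 1
  have hnotB : ∀ z, z ∈ Icc (0:ℝ) 1 → z ∉ nbhdHK g α → 1 < |g z - g α| := by
    intro z hz h
    by_contra hc
    exact h ⟨hz, le_of_not_gt hc⟩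
  have hnotA : ∀ z, z ∈ Icc (0:ℝ) 1 → z ∉ nbhdHK f α → 1 < |f z - f α| := by
    intro z hz h
    by_contra hc
    exact h ⟨hz, le_of_not_gt hc⟩
  have hregm : ∀ x ∈ Icc (0:ℝ) 1 \ P, ∀ y ∈ Icc (0:ℝ) 1 \ P, m * |x - y| ≤ |f x - f y| :=
    fun x hx y hy => (hreg x hx y hy).1
  -- the four shift bounds
  have hw0 : (0:ℝ) ≤ 2 * δ / m := by positivity
  have notP : ∀ z ∈ Icc (0:ℝ) 1, 1 - 2*δ < |f z - f α| → z ∉ P := by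
    intro z hz hgt hzP
    exact absurd (hP z hzP α hα) (not_le.2 hgt)
  have hup : u - p ≤ 2 * δ / m := by
    rcases le_total p' p with h | h
    · have : u = p := max_eq_left h
      rw [this]; linarith
    · have hueq : u = p' := max_eq_right h
      rw [hueq]
      apply windowDiam m δ hm hδ0 f P hregm p p' (f α - 1)
      intro z hz
      have hzA : z ∈ nbhdHK f α := hIooA ⟨hz.1, lt_of_lt_of_le hz.2 (by linarith)⟩
      have hzI : z ∈ Icc (0:ℝ) 1 := hzA.1
      have hzB : z ∉ nbhdHK g α := by
        intro hc
        exact absurd (csInf_le hbddB hc) (not_le.2 hz.2)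
      have hzα : z ≤ α := le_trans hz.2.le hp'α
      have h1 : g z ≤ g α := hg hzI hα hzα
      have h2 : f z ≤ f α := hf hzI hα hzα
      have h3 := hnotB z hzI hzB
      rw [abs_sub_comm, abs_of_nonneg (by linarith)] at h3
      have h4 := (abs_le.1 hzA.2).1
      have ha1 := hδg z hzI
      have ha2 := hδg α hα
      have h5 : 1 - 2*δ < f α - f z := by
        have := (abs_le.1 ha1).1
        have := (abs_le.1 ha1).2
        have := (abs_le.1 ha2).1
        have := (abs_le.1 ha2).2
        linarith
      have hzP : z ∉ P := notP z hzI (by rw [abs_sub_comm, abs_of_nonneg (by linarith)]; linarith)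
      exact ⟨⟨hzI, hzP⟩, by linarith, by linarith⟩
  have hup' : u - p' ≤ 2 * δ / m := by
    rcases le_total p p' with h | h
    · have : u = p' := max_eq_right h
      rw [this]; linarith
    · have hueq : u = p := max_eq_left h
      rw [hueq]
      apply windowDiam m δ hm hδ0 f P hregm p' p (f α - 1 - 2*δ)
      intro z hz
      have hzB : z ∈ nbhdHK g α := hIooB ⟨hz.1, lt_of_lt_of_le hz.2 (by linarith)⟩
      have hzI : z ∈ Icc (0:ℝ) 1 := hzB.1
      have hzA : z ∉ nbhdHK f α := by
        intro hc
        exact absurd (csInf_le hbddA hc) (not_le.2 hz.2)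
      have hzα : z ≤ α := le_trans hz.2.le hpα
      have h1 : g z ≤ g α := hg hzI hα hzα
      have h2 : f z ≤ f α := hf hzI hα hzα
      have h3 := hnotA z hzI hzA
      rw [abs_sub_comm, abs_of_nonneg (by linarith)] at h3
      have h4 := (abs_le.1 hzB.2).1
      have ha1 := hδg z hzI
      have ha2 := hδg α hα
      have h5 : f α - f z ≤ 1 + 2*δ := by
        have := (abs_le.1 ha1).1
        have := (abs_le.1 ha1).2
        have := (abs_le.1 ha2).1
        have := (abs_le.1 ha2).2
        linarith
      have hzP : z ∉ P := notP z hzI (by rw [abs_sub_comm, abs_of_nonneg (by linarith)]; linarith)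
      exact ⟨⟨hzI, hzP⟩, by linarith, by linarith⟩
  have hqv : q - v ≤ 2 * δ / m := by
    rcases le_total q q' with h | h
    · have : v = q := min_eq_left h
      rw [this]; linarith
    · have hveq : v = q' := min_eq_right h
      rw [hveq]
      apply windowDiam m δ hm hδ0 f P hregm q' q (f α + 1 - 2*δ)
      intro z hz
      have hzA : z ∈ nbhdHK f α := hIooA ⟨lt_of_le_of_lt (by linarith) hz.1, hz.2⟩
      have hzI : z ∈ Icc (0:ℝ) 1 := hzA.1
      have hzB : z ∉ nbhdHK g α := by
        intro hc
        exact absurd (le_csSup hbdaB hc) (not_le.2 hz.1)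
      have hzα : α ≤ z := le_trans hαq' hz.1.le
      have h1 : g α ≤ g z := hg hα hzI hzα
      have h2 : f α ≤ f z := hf hα hzI hzα
      have h3 := hnotB z hzI hzB
      rw [abs_of_nonneg (by linarith)] at h3
      have h4 := (abs_le.1 hzA.2).2
      have ha1 := hδg z hzI
      have ha2 := hδg α hα
      have h5 : 1 - 2*δ < f z - f α := by
        have := (abs_le.1 ha1).1
        have := (abs_le.1 ha1).2
        have := (abs_le.1 ha2).1
        have := (abs_le.1 ha2).2
        linarith
      have hzP : z ∉ P := notP z hzI (by rw [abs_of_nonneg (by linarith)]; linarith)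
      exact ⟨⟨hzI, hzP⟩, by linarith, by linarith⟩
  have hq'v : q' - v ≤ 2 * δ / m := by
    rcases le_total q' q with h | h
    · have : v = q' := min_eq_right h
      rw [this]; linarith
    · have hveq : v = q := min_eq_left h
      rw [hveq]
      apply windowDiam m δ hm hδ0 f P hregm q q' (f α + 1)
      intro z hz
      have hzB : z ∈ nbhdHK g α := hIooB ⟨lt_of_le_of_lt (by linarith) hz.1, hz.2⟩
      have hzI : z ∈ Icc (0:ℝ) 1 := hzB.1
      have hzA : z ∉ nbhdHK f α := by
        intro hc
        exact absurd (le_csSup hbdaA hc) (not_le.2 hz.1)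
      have hzα : α ≤ z := le_trans hαq hz.1.le
      have h1 : g α ≤ g z := hg hα hzI hzα
      have h2 : f α ≤ f z := hf hα hzI hzα
      have h3 := hnotA z hzI hzA
      rw [abs_of_nonneg (by linarith)] at h3
      have h4 := (abs_le.1 hzB.2).2
      have ha1 := hδg z hzI
      have ha2 := hδg α hα
      have h5 : f z - f α ≤ 1 + 2*δ := by
        have := (abs_le.1 ha1).1
        have := (abs_le.1 ha1).2
        have := (abs_le.1 ha2).1
        have := (abs_le.1 ha2).2
        linarith
      have hzP : z ∉ P := notP z hzI (by rw [abs_of_nonneg (by linarith)]; linarith)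
      exact ⟨⟨hzI, hzP⟩, by linarith, by linarith⟩
  -- crux applications
  have hT1 : |(∫ x in p..q, f x) / (q - p) - (∫ x in u..v, f x) / (v - u)| ≤
      2 * (2 * δ / m) / r := by
    apply cruxLemma f hf (f α) p u v q (2 * δ / m) r h0p hpu huv hvq hq1 hup hqv
      (by linarith) hr0
    intro x hx
    have := (hIooA hx).2
    exact ⟨by linarith [(abs_le.1 this).1], by linarith [(abs_le.1 this).2]⟩
  have hT3 : |(∫ x in p'..q', g x) / (q' - p') - (∫ x in u..v, g x) / (v - u)| ≤
      2 * (2 * δ / m) / r := by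
    apply cruxLemma g hg (g α) p' u v q' (2 * δ / m) r h0p' hp'u huv hvq' hq'1 hup' hq'v
      (by linarith) hr0
    intro x hx
    have := (hIooB hx).2
    exact ⟨by linarith [(abs_le.1 this).1], by linarith [(abs_le.1 this).2]⟩
  -- term 2
  have h0u : (0:ℝ) ≤ u := le_trans h0p hpu
  have hv1 : v ≤ 1 := le_trans hvq hq1
  have hIf : IntegrableOn f (Icc (0:ℝ) 1) volume := hf.integrableOn_isCompact isCompact_Icc
  have hIg : IntegrableOn g (Icc (0:ℝ) 1) volume := hg.integrableOn_isCompact isCompact_Icc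
  have hIfuv : IntegrableOn f (Ioc u v) volume :=
    hIf.mono_set (fun x hx => ⟨le_trans h0u hx.1.le, le_trans hx.2 hv1⟩)
  have hIguv : IntegrableOn g (Ioc u v) volume :=
    hIg.mono_set (fun x hx => ⟨le_trans h0u hx.1.le, le_trans hx.2 hv1⟩)
  have hT2 : |(∫ x in u..v, f x) / (v - u) - (∫ x in u..v, g x) / (v - u)| ≤ δ := by
    have hvu : 0 < v - u := by linarith
    rw [div_sub_div_same, abs_div, abs_of_pos hvu, div_le_iff₀ hvu]
    rw [← intervalIntegral.integral_sub
      ((intervalIntegrable_iff_integrableOn_Ioc_of_le huv.le).2 hIfuv)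
      ((intervalIntegrable_iff_integrableOn_Ioc_of_le huv.le).2 hIguv)]
    have hle1 : (∫ x in u..v, (f x - g x)) ≤ δ * (v - u) := by
      have := myIntLe (fun x => f x - g x) (fun _ => δ) u v huv.le (hIfuv.sub hIguv)
        (by simp [integrableOn_const]) (fun x hx => by
          have h6 := hδg x ⟨le_trans h0u hx.1.le, le_trans hx.2.le hv1⟩
          show f x - g x ≤ δ
          linarith [(abs_le.1 h6).2])
      simpa [mul_comm] using this
    have hle2 : -(δ * (v - u)) ≤ ∫ x in u..v, (f x - g x) := by
      have := myIntLe (fun _ => -δ) (fun x => f x - g x) u v huv.le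
        (by simp [integrableOn_const]) (hIfuv.sub hIguv) (fun x hx => by
          have h6 := hδg x ⟨le_trans h0u hx.1.le, le_trans hx.2.le hv1⟩
          show -δ ≤ f x - g x
          linarith [(abs_le.1 h6).1])
      have heq : (∫ _ in u..v, (-δ : ℝ)) = -δ * (v - u) := by simp [mul_comm]
      rw [heq] at this
      linarith
    rw [abs_le]
    exact ⟨by linarith, by linarith⟩
  -- assemble
  rw [hupf (by linarith), hupg (by linarith)]
  have htri : |(∫ x in p..q, f x) / (q - p) - (∫ x in p'..q', g x) / (q' - p')| ≤
      2 * (2 * δ / m) / r + δ + 2 * (2 * δ / m) / r := by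
    have e1 := abs_sub_le ((∫ x in p..q, f x) / (q - p)) ((∫ x in u..v, f x) / (v - u))
      ((∫ x in p'..q', g x) / (q' - p'))
    have e2 := abs_sub_le ((∫ x in u..v, f x) / (v - u)) ((∫ x in u..v, g x) / (v - u))
      ((∫ x in p'..q', g x) / (q' - p'))
    have e3 : |(∫ x in u..v, g x) / (v - u) - (∫ x in p'..q', g x) / (q' - p')| =
        |(∫ x in p'..q', g x) / (q' - p') - (∫ x in u..v, g x) / (v - u)| := abs_sub_comm _ _
    rw [e3] at e2
    linarith only [e1, e2, hT1, hT2, hT3]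
  refine le_trans htri ?_
  have hd2 : (0:ℝ) < 1 - 2*δ := by linarith
  have hbound : 2 * (2 * δ / m) / r ≤ 8 * (M/m) * δ := by
    have e1 : 2 * (2 * δ / m) / r = 4 * δ / (m * r) := by
      rw [show 2 * (2 * δ / m) = 4 * δ / m from by ring, div_div]
    rw [e1, div_le_iff₀ (by positivity : (0:ℝ) < m * r)]
    have e2 : 8 * (M / m) * δ * (m * r) = 8 * δ * (M * r) := by
      field_simp [hm.ne']
    rw [e2, hMr]
    have e3 : (0:ℝ) ≤ δ * (1 - 4*δ) :=
      mul_nonneg hδ0 (by linarith only [hδq])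
    linarith only [e3]
  have hδM : δ ≤ (M/m)*δ := by
    have e4 := mul_le_mul_of_nonneg_right hMm1 hδ0
    linarith only [e4]
  linarith only [htri, hbound, hδM]

/-- quantitative continuity of the update at weakly regular
profiles: there is `0 < δ₀ ≤ 1/4` such that for all `δ ≤ δ₀` and all profiles `g`
with `‖f - g‖_∞ ≤ δ`, one has `‖Uf - Ug‖_∞ ≤ 17·(M/m)·δ`. -/
theorem stmt8 (m M : ℝ) (hm : 0 < m) (hM : 0 < M) (f : ℝ → ℝ)
    (hmono : MonotoneOn f (Icc 0 1)) (hwr : WeaklyRegularHK m M f) :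
    ∃ δ₀ : ℝ, 0 < δ₀ ∧ δ₀ ≤ 1 / 4 ∧
      ∀ δ : ℝ, δ ≤ δ₀ → ∀ g : ℝ → ℝ, MonotoneOn g (Icc 0 1) →
        (∀ α ∈ Icc (0:ℝ) 1, |f α - g α| ≤ δ) →
        ∀ α ∈ Icc (0:ℝ) 1, |updateHK f α - updateHK g α| ≤ 17 * (M / m) * δ := by
  obtain ⟨a, b, hsub, hreg, hconst, hend⟩ := hwr
  have hI01 : (0:ℝ) ∈ Icc (0:ℝ) 1 := by norm_num
  have hI11 : (1:ℝ) ∈ Icc (0:ℝ) 1 := by norm_num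
  by_cases hab : a ≤ b
  · -- nonempty plateau
    set N := nbhdHK f 0 ∩ nbhdHK f 1 with hNdef
    have haN : a ∈ N := hsub ⟨le_rfl, hab⟩
    have hbN : b ∈ N := hsub ⟨hab, le_rfl⟩
    have hNsub : N ⊆ Icc (0:ℝ) 1 := fun x hx => hx.1.1
    have hbddN : BddBelow N := ⟨0, fun x hx => (hNsub hx).1⟩
    have hbdaN : BddAbove N := ⟨1, fun x hx => (hNsub hx).2⟩
    have haI : a ∈ Icc (0:ℝ) 1 := hNsub haN
    have hbI : b ∈ Icc (0:ℝ) 1 := hNsub hbN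
    have hfb : f b = f a := hconst b ⟨hab, le_rfl⟩
    have hD2 : f 1 - f 0 ≤ 2 := by
      have h1 := (abs_le.1 haN.1.2).2
      have h2 := (abs_le.1 hbN.2.2).1
      linarith
    obtain ⟨hai, _, _, hbs⟩ := hend hD2 hab
    have ha0 : 0 < a := by
      rcases eq_or_lt_of_le haI.1 with he | hlt
      · exfalso
        apply hai
        have h1 : sInf N ≤ a := csInf_le hbddN haN
        have h2 : 0 ≤ sInf N := le_csInf ⟨a, haN⟩ (fun x hx => (hNsub hx).1)
        rw [← he] at h1 ⊢
        exact le_antisymm h2 h1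
      · exact hlt
    have hb1 : b < 1 := by
      rcases eq_or_lt_of_le hbI.2 with he | hlt
      · exfalso
        apply hbs
        have h1 : b ≤ sSup N := le_csSup hbdaN hbN
        have h2 : sSup N ≤ 1 := csSup_le ⟨a, haN⟩ (fun x hx => (hNsub hx).2)
        rw [he] at h1 ⊢
        exact (le_antisymm h2 h1).symm
      · exact hlt
    have hs0 : f a - f 0 < 1 := by
      by_contra hc
      push_neg at hc
      have heq : f a - f 0 = 1 := le_antisymm (abs_le.1 haN.1.2).2 hc
      have hub : ∀ β ∈ N, β ≤ b := by
        intro β hβ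
        by_contra hβb
        push_neg at hβb
        have hβI : β ∈ Icc (0:ℝ) 1 := hNsub hβ
        have h1 : f β ≤ f 0 + 1 := by linarith [(abs_le.1 hβ.1.2).2]
        have h2 : f a ≤ f β := by rw [← hfb]; exact hmono hbI hβI hβb.le
        have hfβ : f β = f a := le_antisymm (by linarith) h2
        have hx1I : b + (β - b)/3 ∈ Icc (0:ℝ) 1 := ⟨by linarith [hbI.1], by linarith [hβI.2]⟩
        have hx2I : b + 2*(β - b)/3 ∈ Icc (0:ℝ) 1 := ⟨by linarith [hbI.1], by linarith [hβI.2]⟩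
        have hx1P : b + (β - b)/3 ∉ Icc a b := fun h => by
          have := h.2; simp only [Icc] at *; linarith
        have hx2P : b + 2*(β - b)/3 ∉ Icc a b := fun h => by
          have := h.2; simp only [Icc] at *; linarith
        have hfx1 : f (b + (β - b)/3) = f a := by
          apply le_antisymm
          · rw [← hfβ]; exact hmono hx1I hβI (by linarith)
          · rw [← hfb]; exact hmono hbI hx1I (by linarith)
        have hfx2 : f (b + 2*(β - b)/3) = f a := by
          apply le_antisymm
          · rw [← hfβ]; exact hmono hx2I hβI (by linarith)
          · rw [← hfb]; exact hmono hbI hx2I (by linarith)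
        have hr := (hreg _ ⟨hx1I, hx1P⟩ _ ⟨hx2I, hx2P⟩).1
        rw [hfx1, hfx2, sub_self, abs_zero] at hr
        have habs : |b + (β - b)/3 - (b + 2*(β - b)/3)| = (β - b)/3 := by
          rw [show b + (β - b)/3 - (b + 2*(β - b)/3) = -((β - b)/3) by ring,
            abs_neg, abs_of_pos (by linarith)]
        rw [habs] at hr
        have hpos : 0 < m * ((β - b)/3) := mul_pos hm (by linarith)
        linarith
      have hsup : sSup N = b := le_antisymm (csSup_le ⟨a, haN⟩ hub) (le_csSup hbdaN hbN)
      exact hbs hsup.symm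
    have h1s : f 1 - f a < 1 := by
      by_contra hc
      push_neg at hc
      have heq : f 1 - f a = 1 := le_antisymm (by linarith [(abs_le.1 haN.2.2).1]) hc
      have hlb : ∀ β ∈ N, a ≤ β := by
        intro β hβ
        by_contra hβa
        push_neg at hβa
        have hβI : β ∈ Icc (0:ℝ) 1 := hNsub hβ
        have h1 : f 1 - 1 ≤ f β := by linarith [(abs_le.1 hβ.2.2).1]
        have h2 : f β ≤ f a := hmono hβI haI hβa.le
        have hfβ : f β = f a := le_antisymm h2 (by linarith)
        have hx1I : β + (a - β)/3 ∈ Icc (0:ℝ) 1 := ⟨by linarith [hβI.1], by linarith [haI.2]⟩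
        have hx2I : β + 2*(a - β)/3 ∈ Icc (0:ℝ) 1 := ⟨by linarith [hβI.1], by linarith [haI.2]⟩
        have hx1P : β + (a - β)/3 ∉ Icc a b := fun h => by
          have := h.1; simp only [Icc] at *; linarith
        have hx2P : β + 2*(a - β)/3 ∉ Icc a b := fun h => by
          have := h.1; simp only [Icc] at *; linarith
        have hfx1 : f (β + (a - β)/3) = f a := by
          apply le_antisymm
          · exact hmono hx1I haI (by linarith)
          · rw [← hfβ]; exact hmono hβI hx1I (by linarith)
        have hfx2 : f (β + 2*(a - β)/3) = f a := by
          apply le_antisymm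
          · exact hmono hx2I haI (by linarith)
          · rw [← hfβ]; exact hmono hβI hx2I (by linarith)
        have hr := (hreg _ ⟨hx1I, hx1P⟩ _ ⟨hx2I, hx2P⟩).1
        rw [hfx1, hfx2, sub_self, abs_zero] at hr
        have habs : |β + (a - β)/3 - (β + 2*(a - β)/3)| = (a - β)/3 := by
          rw [show β + (a - β)/3 - (β + 2*(a - β)/3) = -((a - β)/3) by ring,
            abs_neg, abs_of_pos (by linarith)]
        rw [habs] at hr
        have hpos : 0 < m * ((a - β)/3) := mul_pos hm (by linarith)
        linarith
      have hinf : sInf N = a := le_antisymm (csInf_le hbddN haN) (le_csInf ⟨a, haN⟩ hlb)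
      exact hai hinf.symm
    have h0P : (0:ℝ) ∉ Icc a b := fun h => by have := h.1; simp only [Icc] at *; linarith
    have h1P : (1:ℝ) ∉ Icc a b := fun h => by have := h.2; simp only [Icc] at *; linarith
    have hreg01 := hreg 0 ⟨hI01, h0P⟩ 1 ⟨hI11, h1P⟩
    have habs01 : |(0:ℝ) - 1| = 1 := by norm_num
    have hf01 : |f 0 - f 1| = f 1 - f 0 := by
      rw [abs_sub_comm, abs_of_nonneg (by linarith [hmono hI01 hI11 zero_le_one])]
    have hmM : m ≤ M := by
      rw [habs01, mul_one, mul_one] at hreg01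
      linarith [hreg01.1, hreg01.2]
    have h01 : f 1 - f 0 ≤ M := by
      rw [habs01, mul_one, mul_one, hf01] at hreg01
      exact hreg01.2
    set ε := min (1 - (f a - f 0)) (1 - (f 1 - f a)) with hεdef
    have hε : 0 < ε := lt_min (by linarith) (by linarith)
    refine ⟨min (1/4) (ε/2), lt_min (by norm_num) (by linarith), min_le_left _ _, ?_⟩
    intro δ hδ g hgmono hδg α hα
    have hδ0 : 0 ≤ δ := le_trans (abs_nonneg _) (hδg 0 hI01)
    have hδq : δ ≤ 1/4 := le_trans hδ (min_le_left _ _)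
    have h2δε : 2*δ ≤ ε := by
      have := le_trans hδ (min_le_right _ _); linarith
    have hP : ∀ x ∈ Icc a b, ∀ γ ∈ Icc (0:ℝ) 1, |f x - f γ| ≤ 1 - 2*δ := by
      intro x hx γ hγ
      rw [hconst x hx]
      have h1 : f 0 ≤ f γ := hmono hI01 hγ hγ.1
      have h2 : f γ ≤ f 1 := hmono hγ hI11 hγ.2
      have hε1 : ε ≤ 1 - (f a - f 0) := min_le_left _ _
      have hε2 : ε ≤ 1 - (f 1 - f a) := min_le_right _ _
      rw [abs_le]
      constructor <;> linarith
    exact coreLemma m M δ hm hmM f g hmono hgmono (Icc a b) hreg hP h01 hδ0 hδq hδg α hα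
  · -- empty plateau
    have hempty : Icc a b = ∅ := Icc_eq_empty hab
    refine ⟨1/4, by norm_num, le_rfl, ?_⟩
    intro δ hδ g hgmono hδg α hα
    have hδ0 : 0 ≤ δ := le_trans (abs_nonneg _) (hδg 0 hI01)
    have hmem : ∀ x ∈ Icc (0:ℝ) 1, x ∈ Icc (0:ℝ) 1 \ Icc a b := fun x hx =>
      ⟨hx, by rw [hempty]; exact notMem_empty x⟩
    have hreg01 := hreg 0 (hmem 0 hI01) 1 (hmem 1 hI11)
    have habs01 : |(0:ℝ) - 1| = 1 := by norm_num
    have hf01 : |f 0 - f 1| = f 1 - f 0 := by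
      rw [abs_sub_comm, abs_of_nonneg (by linarith [hmono hI01 hI11 zero_le_one])]
    have hmM : m ≤ M := by
      rw [habs01, mul_one, mul_one] at hreg01
      linarith [hreg01.1, hreg01.2]
    have h01 : f 1 - f 0 ≤ M := by
      rw [habs01, mul_one, mul_one, hf01] at hreg01
      exact hreg01.2
    refine coreLemma m M δ hm hmM f g hmono hgmono (Icc a b) hreg ?_ h01 hδ0 hδ hδg α hα
    intro x hx
    rw [hempty] at hx
    exact absurd hx (notMem_empty x)
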